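/- Unique decomposition of flow graphs: if s₁ ⌢ s₂ = t for flow graphs s₁, s₂, then there exist flow graphs t₁ and t₂ such that t = t₁ ⋆ t₂, t₁ has the same node set as s₁ and t₂ has the same node set as s₂; moreover t₁ and t₂ are unique with these properties. -/

import Mathlib

universe u

/-- A flow monoid: a commutative monoid whose natural order
(`m ≤ n ↔ ∃ o, n = m + o`) is a partial order that forms an ω-cpo, with
continuous addition. `csup` assigns to every ascending chain its join. -/
class FlowMonoid (M : Type u) extends AddCommMonoid M, PartialOrder M, IsOrderedAddMonoid M,
    CanonicallyOrderedAdd M where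
  /-- The join of an ascending chain. -/
  csup : (ℕ → M) → M
  isLUB_csup : ∀ K : ℕ → M, Monotone K → IsLUB (Set.range K) (csup K)
  add_csup : ∀ (n : M) (K : ℕ → M), Monotone K → n + csup K = csup fun i => n + K i

variable {M : Type u} [FlowMonoid M]

/-- Continuity: `f` commutes with joins of ascending chains. -/
def FMCont (f : M → M) : Prop :=
  ∀ K : ℕ → M, Monotone K →
    IsLUB (Set.range fun i => f (K i)) (f (FlowMonoid.csup K))

/-- A flow graph: a finite set of nodes `X ⊆ ℕ`, continuous edge functions, and
a finitely supported inflow from sources outside `X` into `X`. (The edge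
functions of sources outside `X` and the inflow outside its domain are
canonically zero.) -/
structure FlowGraph (M : Type u) [FlowMonoid M] where
  /-- The nodes. -/
  X : Finset ℕ
  /-- The edge functions: `E x y` labels the edge from `x` to `y`. -/
  E : ℕ → ℕ → M → M
  /-- The inflow: `inflow y x` is the flow the graph receives at `x ∈ X` from the
  external node `y ∉ X`. -/
  inflow : ℕ → ℕ → M
  econt : ∀ x y, x ∈ X → FMCont (E x y)
  edom : ∀ x y, x ∉ X → E x y = fun _ => 0
  inflow_fin : ∀ x, (Function.support fun y => inflow y x).Finite
  inflow_dom : ∀ y x, inflow y x ≠ 0 → y ∉ X ∧ x ∈ X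

namespace FlowGraph

/-- One step of the flow fixed-point computation, with inflow `i`. -/
noncomputable def stepWith (h : FlowGraph M) (i : ℕ → ℕ → M) (c : ℕ → M) : ℕ → M :=
  fun x => if x ∈ h.X then (∑ᶠ y, i y x) + ∑ y ∈ h.X, h.E y x (c y) else 0

/-- The flow for a custom inflow `i`, obtained by Kleene iteration: the least
function satisfying the flow equation. -/
noncomputable def flowWith (h : FlowGraph M) (i : ℕ → ℕ → M) : ℕ → M :=
  fun x => FlowMonoid.csup fun n => (h.stepWith i)^[n] (fun _ => 0) x

/-- The flow of a flow graph. -/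
noncomputable def flow (h : FlowGraph M) : ℕ → M := h.flowWith h.inflow

/-- The outflow of a flow graph: `out x y = E x y (flow x)`. -/
noncomputable def out (h : FlowGraph M) (x y : ℕ) : M := h.E x y (h.flow x)

/-- The transfer function: maps an inflow `i` to the resulting outflow at `y`. -/
noncomputable def tf (h : FlowGraph M) (i : ℕ → ℕ → M) (y : ℕ) : M :=
  ∑ x ∈ h.X, h.E x y (h.flowWith i x)

/-- The ghost multiplication of flow graphs: disjoint union of the node sets and
edges; the inflow of each component is restricted to sources outside the other. -/
def gmul (s t : FlowGraph M) : FlowGraph M where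
  X := s.X ∪ t.X
  E := fun x y => if x ∈ s.X then s.E x y else t.E x y
  inflow := fun y x => if y ∈ s.X ∪ t.X then 0 else s.inflow y x + t.inflow y x
  econt := by
    intro x y hx
    try dsimp only
    by_cases hs : x ∈ s.X
    · rw [if_pos hs]; exact s.econt x y hs
    · rw [if_neg hs]
      rcases Finset.mem_union.mp hx with h | h
      · exact absurd h hs
      · exact t.econt x y h
  edom := by
    intro x y hx
    try dsimp only
    rw [if_neg fun h => hx (Finset.mem_union_left _ h)]
    exact t.edom x y fun h => hx (Finset.mem_union_right _ h)
  inflow_fin := by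
    intro x
    refine Set.Finite.subset ((s.inflow_fin x).union (t.inflow_fin x)) ?_
    intro y hy
    rw [Function.mem_support] at hy
    try dsimp only at hy
    by_cases hmem : y ∈ s.X ∪ t.X
    · rw [if_pos hmem] at hy; exact absurd rfl hy
    · rw [if_neg hmem] at hy
      by_cases h1 : s.inflow y x = 0
      · have h2 : t.inflow y x ≠ 0 := fun h2 => hy (by rw [h1, h2, add_zero])
        exact Set.mem_union_right _ (Function.mem_support.mpr h2)
      · exact Set.mem_union_left _ (Function.mem_support.mpr h1)
  inflow_dom := by
    intro y x hy
    try dsimp only at hy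
    by_cases hmem : y ∈ s.X ∪ t.X
    · rw [if_pos hmem] at hy; exact absurd rfl hy
    · rw [if_neg hmem] at hy
      refine ⟨hmem, ?_⟩
      by_cases h1 : s.inflow y x = 0
      · have h2 : t.inflow y x ≠ 0 := fun h2 => hy (by rw [h1, h2, add_zero])
        exact Finset.mem_union_right _ (t.inflow_dom y x h2).2
      · exact Finset.mem_union_left _ (s.inflow_dom y x h1).2

/-- Definedness of the multiplication `s ⋆ t` of flow graphs: the ghost
multiplication is defined, the inflow expectation of each graph at the mutual
boundary matches the outflow of the other, and the flows are preserved in the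
composition (whose result is then `gmul s t`). -/
def MDef (s t : FlowGraph M) : Prop :=
  Disjoint s.X t.X ∧
  (∀ x ∈ s.X, ∀ y ∈ t.X, s.out x y = t.inflow x y ∧ t.out y x = s.inflow y x) ∧
  (∀ x ∈ s.X, (gmul s t).flow x = s.flow x) ∧
  (∀ y ∈ t.X, (gmul s t).flow y = t.flow y)

end FlowGraph


section Infra

open FlowMonoid

variable {M : Type u} [FlowMonoid M]

lemma le_csup' {K : ℕ → M} (hK : Monotone K) (n : ℕ) : K n ≤ csup K :=
  (isLUB_csup K hK).1 ⟨n, rfl⟩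

lemma csup_le' {K : ℕ → M} (hK : Monotone K) {m : M} (h : ∀ n, K n ≤ m) : csup K ≤ m :=
  (isLUB_csup K hK).2 (by rintro _ ⟨n, rfl⟩; exact h n)

lemma csup_const' (c : M) : csup (fun _ => c) = c :=
  le_antisymm (csup_le' monotone_const fun _ => le_rfl) (le_csup' monotone_const 0)

lemma FMCont.mono {f : M → M} (hf : FMCont f) : Monotone f := by
  intro a b hab
  set K : ℕ → M := fun n => if n = 0 then a else b with hKdef
  have hK : Monotone K := by
    intro i j hij
    dsimp only [K]
    split_ifs with h1 h2 h2
    · exact le_rfl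
    · exact hab
    · omega
    · exact le_rfl
  have h1 : csup K = b := by
    apply le_antisymm
    · apply csup_le' hK
      intro n; dsimp only [K]; split_ifs
      · exact hab
      · exact le_rfl
    · have := le_csup' hK 1
      simpa [K] using this
  have h2 := (hf K hK).1 ⟨0, rfl⟩
  rw [h1] at h2
  simpa [K] using h2

lemma FMCont.map_csup {f : M → M} (hf : FMCont f) {K : ℕ → M} (hK : Monotone K) :
    f (csup K) = csup (fun n => f (K n)) :=
  ((isLUB_csup _ (fun i j h => hf.mono (hK h))).unique (hf K hK)).symm

lemma csup_add_csup {K L : ℕ → M} (hK : Monotone K) (hL : Monotone L) :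
    csup K + csup L = csup (fun n => K n + L n) := by
  have hKL : Monotone (fun n => K n + L n) := fun i j h => add_le_add (hK h) (hL h)
  apply le_antisymm
  · rw [add_csup _ _ hL]
    refine csup_le' (fun i j h => add_le_add_right (hL h) _) fun n => ?_
    rw [add_comm, add_csup _ _ hK]
    refine csup_le' (fun i j h => add_le_add_right (hK h) _) fun m => ?_
    calc L n + K m ≤ L (max n m) + K (max n m) :=
          add_le_add (hL (le_max_left _ _)) (hK (le_max_right _ _))
      _ = K (max n m) + L (max n m) := add_comm _ _
      _ ≤ _ := le_csup' hKL _
  · exact csup_le' hKL fun n => add_le_add (le_csup' hK n) (le_csup' hL n)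

lemma sum_csup' {ι : Type*} (s : Finset ι) (K : ι → ℕ → M) (hK : ∀ y ∈ s, Monotone (K y)) :
    ∑ y ∈ s, csup (K y) = csup (fun n => ∑ y ∈ s, K y n) := by
  classical
  induction s using Finset.induction_on with
  | empty => simp [csup_const' (0 : M)]
  | @insert a s ha ih =>
    rw [Finset.sum_insert ha,
      ih (fun y hy => hK y (Finset.mem_insert_of_mem hy)),
      csup_add_csup (hK a (Finset.mem_insert_self a s))
        (fun i j h => Finset.sum_le_sum fun y hy => hK y (Finset.mem_insert_of_mem hy) h)]
    congr 1
    funext n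
    rw [Finset.sum_insert ha]

lemma csup_succ {K : ℕ → M} (hK : Monotone K) : csup (fun n => K (n + 1)) = csup K := by
  apply le_antisymm
  · exact csup_le' (fun i j h => hK (by omega)) fun n => le_csup' hK (n + 1)
  · exact csup_le' hK fun n =>
      (hK (Nat.le_succ n)).trans (le_csup' (fun i j h => hK (by omega)) n)

namespace FlowGraph

variable (h : FlowGraph M) (i : ℕ → ℕ → M)

lemma step_mono {c c' : ℕ → M} (hc : ∀ x, c x ≤ c' x) :
    ∀ x, h.stepWith i c x ≤ h.stepWith i c' x := by
  intro x
  unfold stepWith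
  split_ifs with hx
  · exact add_le_add_right (Finset.sum_le_sum fun y hy => (h.econt y x hy).mono (hc y)) _
  · exact le_rfl

lemma chain_mono : Monotone (fun n => (h.stepWith i)^[n] (fun _ => 0)) := by
  have key : ∀ n, ∀ x, (h.stepWith i)^[n] (fun _ => 0) x ≤ (h.stepWith i)^[n + 1] (fun _ => 0) x := by
    intro n
    induction n with
    | zero => intro x; exact zero_le
    | succ n ih =>
      intro x
      rw [Function.iterate_succ_apply', Function.iterate_succ_apply']
      exact h.step_mono i (fun y => ih y) x
  intro a b hab
  induction hab with
  | refl => exact le_rfl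
  | step _ ih => exact le_trans ih (key _)

lemma chain_mono_at (x : ℕ) : Monotone (fun n => (h.stepWith i)^[n] (fun _ => 0) x) :=
  fun a b hab => h.chain_mono i hab x

lemma flowWith_of_not_mem {x : ℕ} (hx : x ∉ h.X) : h.flowWith i x = 0 := by
  unfold flowWith
  have : (fun n => (h.stepWith i)^[n] (fun _ => 0) x) = fun _ => (0 : M) := by
    funext n
    cases n with
    | zero => rfl
    | succ n => rw [Function.iterate_succ_apply', stepWith, if_neg hx]
  rw [this, csup_const']

lemma flowWith_fixed : h.stepWith i (h.flowWith i) = h.flowWith i := by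
  funext x
  by_cases hx : x ∈ h.X
  · have step1 : h.stepWith i (h.flowWith i) x =
        (∑ᶠ y, i y x) + ∑ y ∈ h.X, h.E y x (FlowMonoid.csup fun n => (h.stepWith i)^[n] (fun _ => 0) y) := by
      rw [stepWith, if_pos hx]; rfl
    rw [step1]
    have step2 : ∀ y ∈ h.X, h.E y x (FlowMonoid.csup fun n => (h.stepWith i)^[n] (fun _ => 0) y)
        = FlowMonoid.csup fun n => h.E y x ((h.stepWith i)^[n] (fun _ => 0) y) := by
      intro y hy
      exact (h.econt y x hy).map_csup (h.chain_mono_at i y)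
    rw [Finset.sum_congr rfl step2,
      sum_csup' h.X _ (fun y hy => fun a b hab => (h.econt y x hy).mono (h.chain_mono_at i y hab)),
      FlowMonoid.add_csup _ _ (fun a b hab => Finset.sum_le_sum fun y hy =>
        (h.econt y x hy).mono (h.chain_mono_at i y hab))]
    have step3 : (fun n => (∑ᶠ y, i y x) + ∑ y ∈ h.X, h.E y x ((h.stepWith i)^[n] (fun _ => 0) y))
        = fun n => (h.stepWith i)^[n + 1] (fun _ => 0) x := by
      funext n
      rw [Function.iterate_succ_apply', stepWith, if_pos hx]
    rw [step3, csup_succ (h.chain_mono_at i x)]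
    rfl
  · rw [stepWith, if_neg hx, h.flowWith_of_not_mem i hx]

lemma iterate_le_flowWith (n : ℕ) (x : ℕ) :
    (h.stepWith i)^[n] (fun _ => 0) x ≤ h.flowWith i x :=
  le_csup' (h.chain_mono_at i x) n

lemma flowWith_le {c : ℕ → M} (hc : ∀ x, h.stepWith i c x ≤ c x) (x : ℕ) :
    h.flowWith i x ≤ c x := by
  apply csup_le' (h.chain_mono_at i x)
  intro n
  induction n generalizing x with
  | zero => exact zero_le
  | succ n ih =>
    rw [Function.iterate_succ_apply']
    exact le_trans (h.step_mono i (fun y => ih y) x) (hc x)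

lemma ext' {a b : FlowGraph M} (hX : a.X = b.X) (hE : a.E = b.E)
    (hin : a.inflow = b.inflow) : a = b := by
  cases a; cases b
  cases hX; cases hE; cases hin
  rfl

lemma inflow_zero_src {h : FlowGraph M} {y x : ℕ} (hy : y ∈ h.X) : h.inflow y x = 0 := by
  by_contra hne
  exact absurd hy (h.inflow_dom y x hne).1

lemma inflow_zero_tgt {h : FlowGraph M} {y x : ℕ} (hx : x ∉ h.X) : h.inflow y x = 0 := by
  by_contra hne
  exact hx (h.inflow_dom y x hne).2

end FlowGraph

end Infra


section Decomp

open FlowMonoid FlowGraph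

variable {M : Type u} [FlowMonoid M]

/-- The left component of the decomposition of `gmul s t`. -/
noncomputable def FlowGraph.part (s t : FlowGraph M) : FlowGraph M where
  X := s.X
  E := s.E
  inflow := fun y x => if x ∈ s.X ∧ y ∉ s.X then
      (if y ∈ t.X then t.E y x ((gmul s t).flow y) else s.inflow y x) else 0
  econt := s.econt
  edom := s.edom
  inflow_fin := by
    intro x
    refine Set.Finite.subset (Set.Finite.union t.X.finite_toSet (s.inflow_fin x)) ?_
    intro y hy
    rw [Function.mem_support] at hy
    by_cases h1 : y ∈ t.X
    · exact Set.mem_union_left _ h1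
    · refine Set.mem_union_right _ (Function.mem_support.mpr fun h0 => hy ?_)
      split_ifs with h2
      · exact h0
      · rfl
  inflow_dom := by
    intro y x hy
    by_cases h2 : x ∈ s.X ∧ y ∉ s.X
    · exact ⟨h2.2, h2.1⟩
    · rw [if_neg h2] at hy; exact absurd rfl hy

namespace FlowGraph

lemma part_inflow_eq (s t : FlowGraph M) (y x : ℕ) :
    (part s t).inflow y x = if x ∈ s.X ∧ y ∉ s.X then
      (if y ∈ t.X then t.E y x ((gmul s t).flow y) else s.inflow y x) else 0 := rfl

lemma gmul_inflow_eq (s t : FlowGraph M) (y x : ℕ) :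
    (gmul s t).inflow y x =
      if y ∈ s.X ∪ t.X then 0 else s.inflow y x + t.inflow y x := rfl

lemma part_finsum (s t : FlowGraph M) (hdisj : Disjoint s.X t.X) {x : ℕ} (hx : x ∈ s.X) :
    (∑ᶠ y, (part s t).inflow y x)
      = (∑ᶠ y, (gmul s t).inflow y x) + ∑ y ∈ t.X, t.E y x ((gmul s t).flow y) := by
  classical
  have hfin := s.inflow_fin x
  set U : Finset ℕ := t.X ∪ hfin.toFinset with hU
  have hsubt : t.X ⊆ U := Finset.subset_union_left
  have hxt : x ∉ t.X := fun h => (Finset.disjoint_left.mp hdisj hx) h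
  have hpt : ∀ y, (part s t).inflow y x
      = (gmul s t).inflow y x + (if y ∈ t.X then t.E y x ((gmul s t).flow y) else 0) := by
    intro y
    rw [part_inflow_eq, gmul_inflow_eq]
    by_cases h1 : y ∈ s.X
    · have h2 : y ∉ t.X := fun h => (Finset.disjoint_left.mp hdisj h1) h
      rw [if_neg (by tauto), if_neg h2, if_pos (Finset.mem_union_left _ h1), zero_add]
    · by_cases h2 : y ∈ t.X
      · rw [if_pos ⟨hx, h1⟩, if_pos h2, if_pos h2,
          if_pos (Finset.mem_union_right _ h2), zero_add]
      · have h3 : y ∉ s.X ∪ t.X := by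
          rw [Finset.mem_union]; tauto
        rw [if_pos ⟨hx, h1⟩, if_neg h2, if_neg h2, if_neg h3, add_zero,
          inflow_zero_tgt (h := t) hxt, add_zero]
  have hsupp_g : (Function.support fun y => (gmul s t).inflow y x) ⊆ ↑U := by
    intro y hy
    rw [Function.mem_support, gmul_inflow_eq] at hy
    by_cases h3 : y ∈ s.X ∪ t.X
    · rw [if_pos h3] at hy; exact absurd rfl hy
    · rw [if_neg h3, inflow_zero_tgt (h := t) hxt, add_zero] at hy
      exact Finset.mem_coe.mpr (Finset.mem_union_right _ (hfin.mem_toFinset.mpr hy))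
  have hsupp_p : (Function.support fun y => (part s t).inflow y x) ⊆ ↑U := by
    intro y hy
    rw [Function.mem_support, hpt y] at hy
    by_cases h2 : y ∈ t.X
    · exact Finset.mem_coe.mpr (Finset.mem_union_left _ h2)
    · rw [if_neg h2, add_zero] at hy
      exact hsupp_g (Function.mem_support.mpr hy)
  rw [finsum_eq_sum_of_support_subset _ hsupp_p,
    finsum_eq_sum_of_support_subset _ hsupp_g]
  calc ∑ y ∈ U, (part s t).inflow y x
      = ∑ y ∈ U, ((gmul s t).inflow y x
          + (if y ∈ t.X then t.E y x ((gmul s t).flow y) else 0)) :=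
        Finset.sum_congr rfl fun y _ => hpt y
    _ = (∑ y ∈ U, (gmul s t).inflow y x)
          + ∑ y ∈ U, (if y ∈ t.X then t.E y x ((gmul s t).flow y) else 0) :=
        Finset.sum_add_distrib
    _ = _ := by
        congr 1
        rw [Finset.sum_ite_mem, Finset.inter_eq_right.mpr hsubt]

lemma gmul_step (s t : FlowGraph M) (hdisj : Disjoint s.X t.X) {x : ℕ} (hx : x ∈ s.X)
    (c : ℕ → M) :
    (gmul s t).stepWith (gmul s t).inflow c x
      = (∑ᶠ y, (gmul s t).inflow y x)
          + (∑ y ∈ s.X, s.E y x (c y) + ∑ y ∈ t.X, t.E y x (c y)) := by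
  rw [stepWith, if_pos (show x ∈ (gmul s t).X from Finset.mem_union_left _ hx)]
  congr 1
  show ∑ y ∈ s.X ∪ t.X, (gmul s t).E y x (c y) = _
  rw [Finset.sum_union hdisj]
  congr 1
  · exact Finset.sum_congr rfl fun y hy => by
      show (if y ∈ s.X then s.E y x else t.E y x) (c y) = _
      rw [if_pos hy]
  · exact Finset.sum_congr rfl fun y hy => by
      show (if y ∈ s.X then s.E y x else t.E y x) (c y) = _
      rw [if_neg (fun h => (Finset.disjoint_left.mp hdisj h) hy)]

lemma part_step (s t : FlowGraph M) (hdisj : Disjoint s.X t.X) {x : ℕ} (hx : x ∈ s.X)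
    (c : ℕ → M) :
    (part s t).stepWith (part s t).inflow c x
      = (∑ᶠ y, (gmul s t).inflow y x)
          + (∑ y ∈ s.X, s.E y x (c y) + ∑ y ∈ t.X, t.E y x ((gmul s t).flow y)) := by
  rw [stepWith, if_pos (show x ∈ (part s t).X from hx),
    part_finsum s t hdisj hx]
  show _ + ∑ y ∈ s.X, s.E y x (c y) = _
  rw [add_assoc]
  congr 1
  rw [add_comm]

lemma part_flow (s t : FlowGraph M) (hdisj : Disjoint s.X t.X) {x : ℕ} (hx : x ∈ s.X) :
    (part s t).flow x = (gmul s t).flow x := by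
  have hfixg := (gmul s t).flowWith_fixed (gmul s t).inflow
  have hfixp := (part s t).flowWith_fixed (part s t).inflow
  apply le_antisymm
  · -- part flow ≤ gmul flow
    apply (part s t).flowWith_le (part s t).inflow (c := (gmul s t).flow)
    intro z
    by_cases hz : z ∈ s.X
    · rw [part_step s t hdisj hz]
      have : (gmul s t).stepWith (gmul s t).inflow ((gmul s t).flow) z = (gmul s t).flow z :=
        congrFun hfixg z
      rw [← this, gmul_step s t hdisj hz]
    · rw [stepWith, if_neg (show z ∉ (part s t).X from hz)]
      exact zero_le
  · -- gmul flow ≤ part flow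
    show (gmul s t).flowWith (gmul s t).inflow x ≤ _
    rw [flowWith]
    apply csup_le' ((gmul s t).chain_mono_at (gmul s t).inflow x)
    have key : ∀ n, ∀ z, z ∈ s.X →
        ((gmul s t).stepWith (gmul s t).inflow)^[n] (fun _ => 0) z ≤ (part s t).flow z := by
      intro n
      induction n with
      | zero => intro z _; exact zero_le
      | succ n ih =>
        intro z hz
        rw [Function.iterate_succ_apply', gmul_step s t hdisj hz]
        calc (∑ᶠ y, (gmul s t).inflow y z)
              + (∑ y ∈ s.X, s.E y z (((gmul s t).stepWith (gmul s t).inflow)^[n] (fun _ => 0) y)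
                + ∑ y ∈ t.X, t.E y z (((gmul s t).stepWith (gmul s t).inflow)^[n] (fun _ => 0) y))
            ≤ (∑ᶠ y, (gmul s t).inflow y z)
              + (∑ y ∈ s.X, s.E y z ((part s t).flow y)
                + ∑ y ∈ t.X, t.E y z ((gmul s t).flow y)) := by
              refine add_le_add_right (add_le_add ?_ ?_) _
              · exact Finset.sum_le_sum fun y hy => (s.econt y z hy).mono (ih y hy)
              · exact Finset.sum_le_sum fun y hy => (t.econt y z hy).mono
                  ((gmul s t).iterate_le_flowWith (gmul s t).inflow n y)
          _ = (part s t).stepWith (part s t).inflow ((part s t).flow) z :=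
              (part_step s t hdisj hz _).symm
          _ = (part s t).flow z := congrFun hfixp z
    exact fun n => key n x hx

lemma gmul_comm' (s t : FlowGraph M) (hdisj : Disjoint s.X t.X) : gmul s t = gmul t s := by
  apply ext'
  · exact Finset.union_comm _ _
  · funext x y
    show (if x ∈ s.X then s.E x y else t.E x y) = (if x ∈ t.X then t.E x y else s.E x y)
    by_cases h1 : x ∈ s.X
    · rw [if_pos h1, if_neg (fun h => Finset.disjoint_left.mp hdisj h1 h)]
    · rw [if_neg h1]
      by_cases h2 : x ∈ t.X
      · rw [if_pos h2]
      · rw [if_neg h2, s.edom x y h1, t.edom x y h2]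
  · funext y x
    show (if y ∈ s.X ∪ t.X then 0 else s.inflow y x + t.inflow y x)
        = (if y ∈ t.X ∪ s.X then 0 else t.inflow y x + s.inflow y x)
    rw [Finset.union_comm, add_comm]

lemma gmul_part (s t : FlowGraph M) (hdisj : Disjoint s.X t.X) :
    gmul (part s t) (part t s) = gmul s t := by
  apply ext'
  · rfl
  · rfl
  · funext y x
    show (if y ∈ s.X ∪ t.X then 0 else (part s t).inflow y x + (part t s).inflow y x) = _
    rw [gmul_inflow_eq]
    by_cases h3 : y ∈ s.X ∪ t.X
    · rw [if_pos h3, if_pos h3]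
    · rw [if_neg h3, if_neg h3, part_inflow_eq, part_inflow_eq]
      rw [Finset.mem_union] at h3; push_neg at h3
      by_cases hx1 : x ∈ s.X
      · have hx2 : x ∉ t.X := fun h => Finset.disjoint_left.mp hdisj hx1 h
        rw [if_pos ⟨hx1, h3.1⟩, if_neg h3.2, if_neg (by tauto : ¬(x ∈ t.X ∧ y ∉ t.X)),
          add_zero, inflow_zero_tgt (h := t) hx2, add_zero]
      · rw [if_neg (by tauto : ¬(x ∈ s.X ∧ y ∉ s.X)), zero_add,
          inflow_zero_tgt (h := s) hx1, zero_add]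
        by_cases hx2 : x ∈ t.X
        · rw [if_pos ⟨hx2, h3.2⟩, if_neg h3.1]
        · rw [if_neg (by tauto : ¬(x ∈ t.X ∧ y ∉ t.X)), inflow_zero_tgt (h := t) hx2]

lemma mdef_part (s t : FlowGraph M) (hdisj : Disjoint s.X t.X) :
    MDef (part s t) (part t s) := by
  refine ⟨hdisj, ?_, ?_, ?_⟩
  · intro x hx y hy
    constructor
    · show (part s t).E x y ((part s t).flow x) = _
      have hx' : x ∈ s.X := hx
      have hy' : y ∈ t.X := hy
      rw [part_flow s t hdisj hx', part_inflow_eq,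
        if_pos ⟨hy', Finset.disjoint_left.mp hdisj hx'⟩, if_pos hx',
        gmul_comm' s t hdisj]
      rfl
    · show (part t s).E y x ((part t s).flow y) = _
      have hx' : x ∈ s.X := hx
      have hy' : y ∈ t.X := hy
      rw [part_flow t s hdisj.symm hy', part_inflow_eq,
        if_pos ⟨hx', Finset.disjoint_left.mp hdisj.symm hy'⟩, if_pos hy',
        gmul_comm' t s hdisj.symm]
      rfl
  · intro x hx
    rw [gmul_part s t hdisj, part_flow s t hdisj hx]
  · intro y hy
    rw [gmul_part s t hdisj, gmul_comm' s t hdisj, part_flow t s hdisj.symm hy]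

end FlowGraph

end Decomp

open FlowGraph in
/-- Unique decomposition of flow graphs. If `s₁ ⌢ s₂ = t`, then
there is a unique pair `(t₁, t₂)` of flow graphs with `t₁ ⋆ t₂ = t` (in
particular the multiplication is defined), `t₁.X = s₁.X` and `t₂.X = s₂.X`. -/
theorem flowGraph_unique_decomposition (s₁ s₂ t : FlowGraph M)
    (hdisj : Disjoint s₁.X s₂.X) (ht : gmul s₁ s₂ = t) :
    ∃! p : FlowGraph M × FlowGraph M,
      MDef p.1 p.2 ∧ gmul p.1 p.2 = t ∧ p.1.X = s₁.X ∧ p.2.X = s₂.X := by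
  subst ht
  refine ⟨(part s₁ s₂, part s₂ s₁), ⟨mdef_part s₁ s₂ hdisj, gmul_part s₁ s₂ hdisj, rfl, rfl⟩, ?_⟩
  rintro ⟨q₁, q₂⟩ ⟨hq, hgq, hX1, hX2⟩
  have hE := congrArg FlowGraph.E hgq
  have hE1 : q₁.E = s₁.E := by
    funext x y
    by_cases hx : x ∈ s₁.X
    · have h' : (if x ∈ q₁.X then q₁.E x y else q₂.E x y)
          = (if x ∈ s₁.X then s₁.E x y else s₂.E x y) := congrFun (congrFun hE x) y
      rw [if_pos hx, if_pos (show x ∈ q₁.X by rw [hX1]; exact hx)] at h'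
      exact h'
    · rw [q₁.edom x y (by rw [hX1]; exact hx), s₁.edom x y hx]
  have hE2 : q₂.E = s₂.E := by
    funext x y
    by_cases hx : x ∈ s₂.X
    · have h' : (if x ∈ q₁.X then q₁.E x y else q₂.E x y)
          = (if x ∈ s₁.X then s₁.E x y else s₂.E x y) := congrFun (congrFun hE x) y
      have hx1 : x ∉ s₁.X := fun h => Finset.disjoint_left.mp hdisj h hx
      rw [if_neg hx1, if_neg (show x ∉ q₁.X by rw [hX1]; exact hx1)] at h'
      exact h'
    · rw [q₂.edom x y (by rw [hX2]; exact hx), s₂.edom x y hx]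
  have hflow1 : ∀ x ∈ s₁.X, q₁.flow x = (gmul s₁ s₂).flow x := fun x hx => by
    rw [← hq.2.2.1 x (by rw [hX1]; exact hx), hgq]
  have hflow2 : ∀ x ∈ s₂.X, q₂.flow x = (gmul s₁ s₂).flow x := fun x hx => by
    rw [← hq.2.2.2 x (by rw [hX2]; exact hx), hgq]
  have hglob : ∀ (y x : ℕ), y ∉ s₁.X ∪ s₂.X →
      q₁.inflow y x + q₂.inflow y x = s₁.inflow y x + s₂.inflow y x := by
    intro y x hyu
    have h' : (if y ∈ q₁.X ∪ q₂.X then 0 else q₁.inflow y x + q₂.inflow y x)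
        = (if y ∈ s₁.X ∪ s₂.X then 0 else s₁.inflow y x + s₂.inflow y x) :=
      congrFun (congrFun (congrArg FlowGraph.inflow hgq) y) x
    have hyu' : y ∉ q₁.X ∪ q₂.X := by rw [hX1, hX2]; exact hyu
    rw [if_neg hyu', if_neg hyu] at h'
    exact h'
  have hin1 : q₁.inflow = (part s₁ s₂).inflow := by
    funext y x
    rw [part_inflow_eq]
    by_cases hx : x ∈ s₁.X
    · have hx2 : x ∉ s₂.X := fun h => Finset.disjoint_left.mp hdisj hx h
      by_cases hy1 : y ∈ s₁.X
      · rw [if_neg (by tauto : ¬(x ∈ s₁.X ∧ y ∉ s₁.X))]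
        exact inflow_zero_src (by rw [hX1]; exact hy1)
      · rw [if_pos ⟨hx, hy1⟩]
        by_cases hy2 : y ∈ s₂.X
        · rw [if_pos hy2]
          have hb := (hq.2.1 x (by rw [hX1]; exact hx) y (by rw [hX2]; exact hy2)).2
          rw [← hb]
          show q₂.E y x (q₂.flow y) = _
          rw [hE2, hflow2 y hy2]
        · rw [if_neg hy2]
          have h' := hglob y x (by rw [Finset.mem_union]; tauto)
          rw [inflow_zero_tgt (h := q₂) (by rw [hX2]; exact hx2), add_zero,
            inflow_zero_tgt (h := s₂) hx2, add_zero] at h'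
          exact h'
    · rw [if_neg (by tauto : ¬(x ∈ s₁.X ∧ y ∉ s₁.X))]
      exact inflow_zero_tgt (by rw [hX1]; exact hx)
  have hin2 : q₂.inflow = (part s₂ s₁).inflow := by
    funext y x
    rw [part_inflow_eq]
    by_cases hx : x ∈ s₂.X
    · have hx1 : x ∉ s₁.X := fun h => Finset.disjoint_left.mp hdisj h hx
      by_cases hy2 : y ∈ s₂.X
      · rw [if_neg (by tauto : ¬(x ∈ s₂.X ∧ y ∉ s₂.X))]
        exact inflow_zero_src (by rw [hX2]; exact hy2)
      · rw [if_pos ⟨hx, hy2⟩]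
        by_cases hy1 : y ∈ s₁.X
        · rw [if_pos hy1]
          have hb := (hq.2.1 y (by rw [hX1]; exact hy1) x (by rw [hX2]; exact hx)).1
          rw [← hb]
          show q₁.E y x (q₁.flow y) = _
          rw [hE1, hflow1 y hy1, gmul_comm' s₁ s₂ hdisj]
        · rw [if_neg hy1]
          have h' := hglob y x (by rw [Finset.mem_union]; tauto)
          rw [inflow_zero_tgt (h := q₁) (by rw [hX1]; exact hx1), zero_add,
            inflow_zero_tgt (h := s₁) hx1, zero_add] at h'
          exact h'
    · rw [if_neg (by tauto : ¬(x ∈ s₂.X ∧ y ∉ s₂.X))]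
      exact inflow_zero_tgt (by rw [hX2]; exact hx)
  rw [Prod.mk.injEq]
  exact ⟨ext' hX1 hE1 hin1, ext' hX2 hE2 hin2⟩
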